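/- arXiv:2103.07165 — 3 statements merged into one kernel-verified Lean document; each statement's English description precedes it below -/
import Mathlib

section
/- Let d ≥ 1, let B be an invertible d×d real matrix with operator norm ‖B‖, let η ∈ ℝ^d, and let f : ℝ^d → ℝ^d be continuously differentiable and Lipschitz with constant L_f, with ∂f^i/∂x_i(x) ≥ K for all x ∈ ℝ^d and all i = 1,…,d. Then for every continuously differentiable z : [0,1] → ℝ^d with z(0) = z₀, the action I[z] = ∫₀¹ [(1/2)‖B⁻¹(f(z(t)) − ż(t) − η)‖² + (1/2)tr(Df(z(t)))] dt satisfies I[z] ≥ ((1/4 − L_f²)/‖B‖²) ∫₀¹ ‖ż(t)‖² dt − ‖f(z₀) − η‖²/‖B‖² + dK/2. -/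
set_option maxHeartbeats 1000000


/-- Multiplication of a Euclidean vector by a matrix, viewed again as a Euclidean vector. -/
noncomputable def matMulVec {d : ℕ} (B : Matrix (Fin d) (Fin d) ℝ)
    (v : EuclideanSpace ℝ (Fin d)) : EuclideanSpace ℝ (Fin d) :=
  WithLp.toLp 2 (B.mulVec v)

/-- The operator norm of a matrix acting on Euclidean space. -/
noncomputable def matOpNorm {d : ℕ} (B : Matrix (Fin d) (Fin d) ℝ) : ℝ :=
  ‖LinearMap.toContinuousLinearMap (Matrix.toEuclideanLin B)‖

private theorem aux_expand (a m y : ℝ) (hm : m ≠ 0) :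
    (a / (2 * m ^ 2) + 1 / 2 * y) * (4 * m ^ 2) = 2 * a + 2 * m ^ 2 * y := by
  field_simp; ring

private theorem aux_final (l m s c dk : ℝ) (hm : m ≠ 0) :
    (1 / 4 - l ^ 2) / m ^ 2 * s - c / m ^ 2 + dk / 2
      = 1 / (4 * m ^ 2) * s + (dk / 2 - (2 * l ^ 2 * s + 2 * c) / (2 * m ^ 2)) := by
  field_simp; ring

/-- The coercivity estimate (3.3) for the Onsager–Machlup action functional
`I[z] = ∫₀¹ (1/2)‖B⁻¹(f(z) − ż − η)‖² + (1/2) tr(Df(z)) dt`: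
`I[z] ≥ ((1/4 − L_f²)/‖B‖²) ∫₀¹‖ż‖² − ‖f(z₀) − η‖²/‖B‖² + dK/2`. -/
theorem OM_action_coercivity
    (d : ℕ) (hd : 1 ≤ d)
    (B : Matrix (Fin d) (Fin d) ℝ) (hB : IsUnit B.det)
    (η : EuclideanSpace ℝ (Fin d))
    (f : EuclideanSpace ℝ (Fin d) → EuclideanSpace ℝ (Fin d))
    (hf : ContDiff ℝ 1 f)
    (Lf : ℝ) (hLip : ∀ a b : EuclideanSpace ℝ (Fin d), ‖f a - f b‖ ≤ Lf * ‖a - b‖)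
    (K : ℝ)
    (hK : ∀ (x : EuclideanSpace ℝ (Fin d)) (i : Fin d),
      K ≤ fderiv ℝ f x (EuclideanSpace.single i 1) i)
    (z₀ : EuclideanSpace ℝ (Fin d))
    (z : ℝ → EuclideanSpace ℝ (Fin d))
    (hz : ContDiff ℝ 1 z) (hz0 : z 0 = z₀) :
    ((1 / 4 - Lf ^ 2) / matOpNorm B ^ 2) * (∫ t in (0:ℝ)..1, ‖deriv z t‖ ^ 2)
        - ‖f z₀ - η‖ ^ 2 / matOpNorm B ^ 2 + d * K / 2
      ≤ ∫ t in (0:ℝ)..1,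
          ((1 / 2) * ‖matMulVec B⁻¹ (f (z t) - deriv z t - η)‖ ^ 2
            + (1 / 2) * ∑ i, fderiv ℝ f (z t) (EuclideanSpace.single i 1) i) := by
  subst hz0
  set M := matOpNorm B with hMdef
  -- key operator-norm inequality
  have key : ∀ w : EuclideanSpace ℝ (Fin d), ‖w‖ ≤ M * ‖matMulVec B⁻¹ w‖ := by
    intro w
    have h1 : matMulVec B (matMulVec B⁻¹ w) = w := by
      show WithLp.toLp 2 (B.mulVec (B⁻¹.mulVec (WithLp.ofLp w))) = w
      rw [Matrix.mulVec_mulVec, Matrix.mul_nonsing_inv B hB, Matrix.one_mulVec, WithLp.toLp_ofLp]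
    calc ‖w‖ = ‖matMulVec B (matMulVec B⁻¹ w)‖ := by rw [h1]
      _ ≤ M * ‖matMulVec B⁻¹ w‖ := by
        have h := (LinearMap.toContinuousLinearMap (Matrix.toEuclideanLin B)).le_opNorm (matMulVec B⁻¹ w)
        rw [LinearMap.coe_toContinuousLinearMap', Matrix.toEuclideanLin_apply] at h
        exact h
  have hM : 0 < M := by
    have i : Fin d := ⟨0, hd⟩
    have h := key (EuclideanSpace.single i 1)
    rw [EuclideanSpace.norm_single, norm_one] at h
    nlinarith [norm_nonneg (matMulVec B⁻¹ (EuclideanSpace.single i (1:ℝ)))]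
  have hM2 : (0:ℝ) < M ^ 2 := pow_pos hM 2
  clear_value M
  have hLf : 0 ≤ Lf := by
    have i : Fin d := ⟨0, hd⟩
    have h := hLip (EuclideanSpace.single i 1) 0
    rw [sub_zero, EuclideanSpace.norm_single, norm_one, mul_one] at h
    exact le_trans (norm_nonneg _) h
  -- continuity facts
  have hv : Continuous (deriv z) := hz.continuous_deriv le_rfl
  have hzc : Continuous z := hz.continuous
  have hfc : Continuous f := hf.continuous
  have hDf : Continuous (fderiv ℝ f) := hf.continuous_fderiv one_ne_zero
  have hnormv : Continuous fun t => ‖deriv z t‖ := hv.norm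
  have hnormv2 : Continuous fun t => ‖deriv z t‖ ^ 2 := hnormv.pow 2
  set S := ∫ t in (0:ℝ)..1, ‖deriv z t‖ ^ 2 with hSdef
  set C0 := ‖f (z 0) - η‖ ^ 2 with hC0def
  clear_value S C0
  -- Cauchy-Schwarz: (∫₀¹‖ż‖)² ≤ S
  have hJ2 : (∫ t in (0:ℝ)..1, ‖deriv z t‖) ^ 2 ≤ S := by
    rw [hSdef]
    set g := fun t => ‖deriv z t‖ with hgdef
    set c := ∫ t in (0:ℝ)..1, g t with hc
    have hgi : IntervalIntegrable g MeasureTheory.volume 0 1 := hnormv.intervalIntegrable 0 1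
    have hg2i : IntervalIntegrable (fun t => g t ^ 2) MeasureTheory.volume 0 1 :=
      hnormv2.intervalIntegrable 0 1
    have hnn : (0:ℝ) ≤ ∫ t in (0:ℝ)..1, (g t - c) ^ 2 :=
      intervalIntegral.integral_nonneg zero_le_one (fun t _ => sq_nonneg _)
    have hexp : (∫ t in (0:ℝ)..1, (g t - c) ^ 2)
        = (∫ t in (0:ℝ)..1, g t ^ 2) - (2 * c) * c + c ^ 2 := by
      have h1 : ∀ t : ℝ, (g t - c) ^ 2 = g t ^ 2 - (2 * c) * g t + c ^ 2 := fun t => by ring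
      simp_rw [h1]
      rw [intervalIntegral.integral_add (hg2i.sub (hgi.const_mul (2 * c)))
          intervalIntegrable_const,
        intervalIntegral.integral_sub hg2i (hgi.const_mul (2 * c)),
        intervalIntegral.integral_const_mul, intervalIntegral.integral_const]
      simp
      exact Or.inl rfl
    nlinarith [hnn, hexp]
  -- path bound
  have hpath : ∀ t ∈ Set.Icc (0:ℝ) 1, ‖z t - z 0‖ ≤ ∫ s in (0:ℝ)..1, ‖deriv z s‖ := by
    intro t ht
    have hftc : ∫ s in (0:ℝ)..t, deriv z s = z t - z 0 :=
      intervalIntegral.integral_deriv_eq_sub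
        (fun s _ => (hz.differentiable one_ne_zero).differentiableAt)
        (hv.intervalIntegrable 0 t)
    calc ‖z t - z 0‖ = ‖∫ s in (0:ℝ)..t, deriv z s‖ := by rw [hftc]
      _ ≤ ∫ s in (0:ℝ)..t, ‖deriv z s‖ :=
          intervalIntegral.norm_integral_le_integral_norm ht.1
      _ ≤ ∫ s in (0:ℝ)..1, ‖deriv z s‖ := by
          apply intervalIntegral.integral_mono_interval le_rfl ht.1 ht.2
          · filter_upwards with s using norm_nonneg _
          · exact hnormv.intervalIntegrable 0 1
  -- pointwise bound on f(z t) - η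
  have hfb : ∀ t ∈ Set.Icc (0:ℝ) 1,
      ‖f (z t) - η‖ ^ 2 ≤ 2 * Lf ^ 2 * S + 2 * C0 := by
    intro t ht
    have h1 : ‖f (z t) - η‖ ≤ Lf * ‖z t - z 0‖ + ‖f (z 0) - η‖ := by
      calc ‖f (z t) - η‖ = ‖(f (z t) - f (z 0)) + (f (z 0) - η)‖ := by abel_nf
        _ ≤ ‖f (z t) - f (z 0)‖ + ‖f (z 0) - η‖ := norm_add_le _ _
        _ ≤ Lf * ‖z t - z 0‖ + ‖f (z 0) - η‖ := by
            gcongr; exact hLip _ _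
    have h2 := hpath t ht
    have h3 : ‖z t - z 0‖ ^ 2 ≤ S := by
      have hJnn : (0:ℝ) ≤ ∫ s in (0:ℝ)..1, ‖deriv z s‖ :=
        intervalIntegral.integral_nonneg (μ := MeasureTheory.volume) zero_le_one
          (fun s _ => norm_nonneg (deriv z s))
      nlinarith [norm_nonneg (z t - z 0)]
    nlinarith [norm_nonneg (f (z t) - η), norm_nonneg (z t - z 0),
      norm_nonneg (f (z 0) - η), sq_nonneg (Lf * ‖z t - z 0‖ - ‖f (z 0) - η‖)]
  -- trace bound
  have htr : ∀ x : EuclideanSpace ℝ (Fin d),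
      (d : ℝ) * K ≤ ∑ i, fderiv ℝ f x (EuclideanSpace.single i 1) i := by
    intro x
    calc (d : ℝ) * K = ∑ _i : Fin d, K := by
          rw [Finset.sum_const, Finset.card_univ, Fintype.card_fin, nsmul_eq_mul]
      _ ≤ _ := Finset.sum_le_sum (fun i _ => hK x i)
  -- integrability of the RHS integrand
  have hBinvc : Continuous fun t => matMulVec B⁻¹ (f (z t) - deriv z t - η) := by
    exact (LinearMap.toContinuousLinearMap (Matrix.toEuclideanLin B⁻¹)).continuous.comp
      (((hfc.comp hzc).sub hv).sub continuous_const)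
  have htrc : Continuous fun t => ∑ i, fderiv ℝ f (z t) (EuclideanSpace.single i 1) i := by
    apply continuous_finset_sum
    intro i _
    exact (EuclideanSpace.proj i).continuous.comp
      ((ContinuousLinearMap.apply ℝ _ (EuclideanSpace.single i (1:ℝ))).continuous.comp
        (hDf.comp hzc))
  have hGc : Continuous fun t =>
      (1 / 2) * ‖matMulVec B⁻¹ (f (z t) - deriv z t - η)‖ ^ 2
        + (1 / 2) * ∑ i, fderiv ℝ f (z t) (EuclideanSpace.single i 1) i :=
    (continuous_const.mul (hBinvc.norm.pow 2)).add (continuous_const.mul htrc)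
  have hGint : IntervalIntegrable _ MeasureTheory.volume 0 1 := hGc.intervalIntegrable 0 1
  -- lower integrand
  set cst := (d : ℝ) * K / 2 - (2 * Lf ^ 2 * S + 2 * C0) / (2 * M ^ 2) with hcst
  clear_value cst
  have hLint : IntervalIntegrable
      (fun t => 1 / (4 * M ^ 2) * ‖deriv z t‖ ^ 2 + cst) MeasureTheory.volume 0 1 :=
    ((continuous_const.mul hnormv2).add continuous_const).intervalIntegrable 0 1
  have hmono : (∫ t in (0:ℝ)..1, (1 / (4 * M ^ 2) * ‖deriv z t‖ ^ 2 + cst))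
      ≤ ∫ t in (0:ℝ)..1,
          ((1 / 2) * ‖matMulVec B⁻¹ (f (z t) - deriv z t - η)‖ ^ 2
            + (1 / 2) * ∑ i, fderiv ℝ f (z t) (EuclideanSpace.single i 1) i) := by
    apply intervalIntegral.integral_mono_on zero_le_one hLint hGint
    intro t ht
    set w := f (z t) - deriv z t - η with hw
    clear_value w
    have hw1 : ‖w‖ ≤ M * ‖matMulVec B⁻¹ w‖ := key w
    have hw2 : ‖deriv z t‖ ≤ ‖f (z t) - η‖ + ‖w‖ := by
      have : deriv z t = (f (z t) - η) - w := by rw [hw]; abel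
      rw [this]; exact norm_sub_le _ _
    have hbt := hfb t ht
    have htt := htr (z t)
    -- X ≤ 2F + 2W², F ≤ Cc, W ≤ M Y
    have h2sq := pow_le_pow_left₀ (norm_nonneg (deriv z t)) hw2 2
    have h1sq := pow_le_pow_left₀ (norm_nonneg w) hw1 2
    have hA : ‖deriv z t‖ ^ 2 ≤ 2 * (2 * Lf ^ 2 * S + 2 * C0)
        + 2 * M ^ 2 * ‖matMulVec B⁻¹ w‖ ^ 2 := by
      nlinarith [h2sq, h1sq, hbt, sq_nonneg (‖f (z t) - η‖ - ‖w‖)]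
    have h8 : 1 / (4 * M ^ 2) * ‖deriv z t‖ ^ 2
        ≤ (2 * Lf ^ 2 * S + 2 * C0) / (2 * M ^ 2)
          + 1 / 2 * ‖matMulVec B⁻¹ w‖ ^ 2 := by
      rw [div_mul_eq_mul_div, div_le_iff₀ (mul_pos (by norm_num : (0:ℝ) < 4) hM2),
        aux_expand _ _ _ (ne_of_gt hM)]
      linarith [hA]
    rw [hcst]
    linarith [h8, htt]
  refine le_trans (le_of_eq ?_) hmono
  rw [intervalIntegral.integral_add (f := fun t => 1 / (4 * M ^ 2) * ‖deriv z t‖ ^ 2) (((continuous_const.mul hnormv2)).intervalIntegrable 0 1)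
      intervalIntegrable_const,
    intervalIntegral.integral_const_mul, intervalIntegral.integral_const]
  simp only [smul_eq_mul, sub_zero, one_mul]
  rw [← hSdef, hcst]
  exact aux_final Lf M S C0 ((d : ℝ) * K) (ne_of_gt hM)
end

section
/- Let d ≥ 1, let B be an invertible d×d real matrix, η ∈ ℝ^d, and let f : ℝ^d → ℝ^d be twice continuously differentiable. Suppose z : [0,1] → ℝ^d is twice continuously differentiable with z(0) = z₀ and z(1) = z₁, and z minimizes the action I[w] = ∫₀¹ [(1/2)‖B⁻¹(f(w(t)) − ẇ(t) − η)‖² + (1/2)tr(Df(w(t)))] dt among all twice continuously differentiable curves w : [0,1] → ℝ^d with w(0) = z₀ and w(1) = z₁. Then for every t ∈ (0,1) and every i ∈ {1,…,d}, z satisfies the Euler–Lagrange equation ⟨B⁻¹(z̈(t) − Df(z(t))ż(t)), B⁻¹e_i⟩ = ⟨B⁻¹(f(z(t)) − ż(t) − η), B⁻¹ ∂f/∂x_i(z(t))⟩ + (1/2) Σ_{j=1}^{d} ∂²f^j/∂x_i∂x_j(z(t)), where (e_i) is the standard orthonormal basis of ℝ^d and ∂f/∂x_i denotes the vector of partial derivatives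 (∂f^1/∂x_i, …, ∂f^d/∂x_i). -/
/-- The Onsager–Machlup action functional
`I[w] = ∫₀¹ (1/2)‖B⁻¹(f(w(t)) − ẇ(t) − η)‖² + (1/2) tr(Df(w(t))) dt`. -/
noncomputable def OMaction {d : ℕ} (B : Matrix (Fin d) (Fin d) ℝ)
    (η : EuclideanSpace ℝ (Fin d))
    (f : EuclideanSpace ℝ (Fin d) → EuclideanSpace ℝ (Fin d))
    (w : ℝ → EuclideanSpace ℝ (Fin d)) : ℝ :=
  ∫ t in (0:ℝ)..1,
    ((1 / 2) * ‖matMulVec B⁻¹ (f (w t) - deriv w t - η)‖ ^ 2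
      + (1 / 2) * ∑ i, fderiv ℝ f (w t) (EuclideanSpace.single i 1) i)

open MeasureTheory intervalIntegral Metric Set Function
noncomputable def matCLM {d : ℕ} (B : Matrix (Fin d) (Fin d) ℝ) :
    EuclideanSpace ℝ (Fin d) →L[ℝ] EuclideanSpace ℝ (Fin d) :=
  LinearMap.toContinuousLinearMap
    ((WithLp.linearEquiv 2 ℝ (Fin d → ℝ)).symm.toLinearMap ∘ₗ
      B.mulVecLin ∘ₗ (WithLp.linearEquiv 2 ℝ (Fin d → ℝ)).toLinearMap)

lemma matCLM_apply {d : ℕ} (B : Matrix (Fin d) (Fin d) ℝ) (v : EuclideanSpace ℝ (Fin d)) :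
    matCLM B v = matMulVec B v := rfl


lemma fund_aux {g : ℝ → ℝ} (hg : Continuous g)
    (h : ∀ ψ : ℝ → ℝ, ContDiff ℝ 2 ψ → ψ 0 = 0 → ψ 1 = 0 →
      ∫ s in (0:ℝ)..1, ψ s * g s = 0)
    {t₀ : ℝ} (ht₀ : t₀ ∈ Set.Ioo (0:ℝ) 1) (hpos : 0 < g t₀) : False := by
  -- find δ with ball t₀ δ ⊆ Ioo 0 1 ∩ {g > g t₀ / 2}
  have hopen : IsOpen (Set.Ioo (0:ℝ) 1 ∩ g ⁻¹' Set.Ioi (g t₀ / 2)) :=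
    isOpen_Ioo.inter (hg.isOpen_preimage _ isOpen_Ioi)
  have hmem : t₀ ∈ Set.Ioo (0:ℝ) 1 ∩ g ⁻¹' Set.Ioi (g t₀ / 2) :=
    ⟨ht₀, by simp; linarith⟩
  obtain ⟨δ, hδpos, hδ⟩ := Metric.isOpen_iff.1 hopen t₀ hmem
  set b : ContDiffBump t₀ := ⟨δ/2, δ, by linarith, by linarith⟩
  have hψc : ContDiff ℝ 2 (b : ℝ → ℝ) := b.contDiff
  have hsupp : Function.support (b : ℝ → ℝ) = ball t₀ δ := b.support_eq
  have hball : ball t₀ δ ⊆ Set.Ioo (0:ℝ) 1 := fun x hx => (hδ hx).1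
  have hψ0 : (b : ℝ → ℝ) 0 = 0 := by
    by_contra hc
    exact absurd (hball (hsupp ▸ Function.mem_support.2 hc)).1 (lt_irrefl 0)
  have hψ1 : (b : ℝ → ℝ) 1 = 0 := by
    by_contra hc
    exact absurd (hball (hsupp ▸ Function.mem_support.2 hc)).2 (lt_irrefl 1)
  have hzero := h b hψc hψ0 hψ1
  -- pointwise bound : (g t₀ / 2) * b s ≤ b s * g s
  have hpt : ∀ s, (g t₀ / 2) * b s ≤ b s * g s := by
    intro s
    by_cases hs : s ∈ ball t₀ δ
    · have : g t₀ / 2 < g s := (hδ hs).2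
      nlinarith [b.nonneg (x := s)]
    · have : (b : ℝ → ℝ) s = 0 := by
        by_contra hc; exact hs (hsupp ▸ Function.mem_support.2 hc)
      simp [this]
  have hint1 : IntervalIntegrable (fun s => (g t₀ / 2) * b s) volume 0 1 :=
    (continuous_const.mul b.continuous).intervalIntegrable 0 1
  have hint2 : IntervalIntegrable (fun s => b s * g s) volume 0 1 :=
    (b.continuous.mul hg).intervalIntegrable 0 1
  have hmono : ∫ s in (0:ℝ)..1, (g t₀ / 2) * b s ≤ ∫ s in (0:ℝ)..1, b s * g s :=
    intervalIntegral.integral_mono_on (by norm_num) hint1 hint2 (fun s _ => hpt s)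
  rw [hzero] at hmono
  -- ∫ b > 0
  have hIoo : Set.Ioo (t₀ - δ/2) (t₀ + δ/2) ⊆ ball t₀ δ := by
    intro x hx
    rw [Metric.mem_ball, Real.dist_eq, abs_lt]
    constructor <;> [linarith [hx.1]; linarith [hx.2]]
  have hIb : 0 < ∫ s in (t₀ - δ/2)..(t₀ + δ/2), (b : ℝ → ℝ) s := by
    apply intervalIntegral_pos_of_pos_on (b.continuous.intervalIntegrable _ _)
      (fun x hx => b.pos_of_mem_ball (hIoo hx))
    linarith
  have hsub : t₀ - δ/2 ∈ Set.Icc (0:ℝ) 1 ∧ t₀ + δ/2 ∈ Set.Icc (0:ℝ) 1 := by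
    have h1 : t₀ - δ/2 ∈ ball t₀ δ ∨ t₀ - δ/2 = t₀ - δ/2 := Or.inr rfl
    have e1 : (t₀ - δ/2) ∈ ball t₀ δ := by
      rw [Metric.mem_ball, Real.dist_eq]; rw [abs_lt]; constructor <;> linarith
    have e2 : (t₀ + δ/2) ∈ ball t₀ δ := by
      rw [Metric.mem_ball, Real.dist_eq]; rw [abs_lt]; constructor <;> linarith
    exact ⟨⟨(hball e1).1.le, (hball e1).2.le⟩, ⟨(hball e2).1.le, (hball e2).2.le⟩⟩
  -- ∫₀¹ b ≥ ∫ sub b > 0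
  have hsplit : ∫ s in (0:ℝ)..1, (b : ℝ → ℝ) s
      = (∫ s in (0:ℝ)..(t₀ - δ/2), (b : ℝ → ℝ) s)
        + (∫ s in (t₀ - δ/2)..(t₀ + δ/2), (b : ℝ → ℝ) s)
        + (∫ s in (t₀ + δ/2)..(1:ℝ), (b : ℝ → ℝ) s) := by
    rw [intervalIntegral.integral_add_adjacent_intervals, intervalIntegral.integral_add_adjacent_intervals]
    all_goals exact b.continuous.intervalIntegrable _ _
  have hI0 : 0 < ∫ s in (0:ℝ)..1, (b : ℝ → ℝ) s := by
    rw [hsplit]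
    have n1 : 0 ≤ ∫ s in (0:ℝ)..(t₀ - δ/2), (b : ℝ → ℝ) s :=
      intervalIntegral.integral_nonneg hsub.1.1 (fun x _ => b.nonneg)
    have n2 : 0 ≤ ∫ s in (t₀ + δ/2)..(1:ℝ), (b : ℝ → ℝ) s :=
      intervalIntegral.integral_nonneg hsub.2.2 (fun x _ => b.nonneg)
    linarith
  have : (0:ℝ) < g t₀ / 2 * ∫ s in (0:ℝ)..1, (b : ℝ → ℝ) s := by positivity
  rw [← intervalIntegral.integral_const_mul] at this
  linarith

lemma fund_lemma {g : ℝ → ℝ} (hg : Continuous g)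
    (h : ∀ ψ : ℝ → ℝ, ContDiff ℝ 2 ψ → ψ 0 = 0 → ψ 1 = 0 →
      ∫ s in (0:ℝ)..1, ψ s * g s = 0)
    {t₀ : ℝ} (ht₀ : t₀ ∈ Set.Ioo (0:ℝ) 1) : g t₀ = 0 := by
  rcases lt_trichotomy (g t₀) 0 with hlt | heq | hgt
  · exfalso
    refine fund_aux (g := fun s => -g s) hg.neg (fun ψ hψ h0 h1 => ?_) ht₀ (by simpa using hlt)
    have := h ψ hψ h0 h1
    simp only [mul_neg]
    rw [intervalIntegral.integral_neg, this, neg_zero]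
  · exact heq
  · exact absurd (fund_aux hg h ht₀ hgt) id

section stuff

variable {d : ℕ} (A : EuclideanSpace ℝ (Fin d) →L[ℝ] EuclideanSpace ℝ (Fin d))
  (η : EuclideanSpace ℝ (Fin d)) (f : EuclideanSpace ℝ (Fin d) → EuclideanSpace ℝ (Fin d))
  (z : ℝ → EuclideanSpace ℝ (Fin d)) (v : EuclideanSpace ℝ (Fin d))

/-- second-derivative trace-variation term -/
noncomputable def Sfun (x : EuclideanSpace ℝ (Fin d)) : ℝ :=
  ∑ j, fderiv ℝ (fun y => fderiv ℝ f y (EuclideanSpace.single j 1) j) x v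

noncomputable def uFun : ℝ → EuclideanSpace ℝ (Fin d) := fun s => f (z s) - deriv z s - η

noncomputable def Pfun : ℝ → ℝ := fun s =>
  inner ℝ (A (uFun η f z s)) (A (fderiv ℝ f (z s) v)) + (1/2) * Sfun f v (z s)

noncomputable def Qfun : ℝ → ℝ := fun s => inner ℝ (A (uFun η f z s)) (A v)

noncomputable def Qdfun : ℝ → ℝ := fun s =>
  inner ℝ (A (fderiv ℝ f (z s) (deriv z s) - deriv (deriv z) s)) (A v)

variable {f z}

lemma hj_contDiff (hf : ContDiff ℝ 2 f) (j : Fin d) :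
    ContDiff ℝ 1 (fun y => fderiv ℝ f y (EuclideanSpace.single j 1) j) := by
  have hDf1 : ContDiff ℝ 1 (fderiv ℝ f) := hf.fderiv_right (by norm_num)
  have : (fun y => fderiv ℝ f y (EuclideanSpace.single j 1) j)
      = (fun T : EuclideanSpace ℝ (Fin d) →L[ℝ] EuclideanSpace ℝ (Fin d) =>
          ((EuclideanSpace.proj j).comp
            (ContinuousLinearMap.apply ℝ (EuclideanSpace ℝ (Fin d))
              (EuclideanSpace.single j 1))) T) ∘ (fderiv ℝ f) := rfl
  rw [this]
  exact (ContinuousLinearMap.contDiff _).comp hDf1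

end stuff



section keysec

variable {d : ℕ} {f : EuclideanSpace ℝ (Fin d) → EuclideanSpace ℝ (Fin d)}
  {z : ℝ → EuclideanSpace ℝ (Fin d)}

lemma key_lemma (B : Matrix (Fin d) (Fin d) ℝ) (η : EuclideanSpace ℝ (Fin d))
    (hf : ContDiff ℝ 2 f) (hz : ContDiff ℝ 2 z)
    (hmin : ∀ w : ℝ → EuclideanSpace ℝ (Fin d),
      ContDiff ℝ 2 w → w 0 = z 0 → w 1 = z 1 → OMaction B η f z ≤ OMaction B η f w)
    (v : EuclideanSpace ℝ (Fin d))
    (ψ : ℝ → ℝ) (hψ : ContDiff ℝ 2 ψ) (hψ0 : ψ 0 = 0) (hψ1 : ψ 1 = 0) :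
    ∫ s in (0:ℝ)..1,
      ψ s * (Pfun (matCLM B⁻¹) η f z v s + Qdfun (matCLM B⁻¹) f z v s) = 0 := by
  set A : EuclideanSpace ℝ (Fin d) →L[ℝ] EuclideanSpace ℝ (Fin d) := matCLM B⁻¹ with hA
  -- regularity facts
  have hz11 : ContDiff ℝ (1+1) z := by rw [one_add_one_eq_two]; exact_mod_cast hz
  have hψ11 : ContDiff ℝ (1+1) ψ := by rw [one_add_one_eq_two]; exact_mod_cast hψ
  have hz_d : Differentiable ℝ z := hz.differentiable two_ne_zero
  have hz'_cd : ContDiff ℝ 1 (deriv z) := (contDiff_succ_iff_deriv.mp hz11).2.2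
  have hz'_d : Differentiable ℝ (deriv z) := hz'_cd.differentiable one_ne_zero
  have hz'_c : Continuous (deriv z) := hz'_d.continuous
  have hz''_c : Continuous (deriv (deriv z)) := (contDiff_one_iff_deriv.mp hz'_cd).2
  have hψ_d : Differentiable ℝ ψ := hψ.differentiable two_ne_zero
  have hψ'_c : Continuous (deriv ψ) := ((contDiff_succ_iff_deriv.mp hψ11).2.2).continuous
  have hf_d : Differentiable ℝ f := hf.differentiable two_ne_zero
  have hf_c : Continuous f := hf.continuous
  have hDf_c : Continuous (fderiv ℝ f) := hf.continuous_fderiv two_ne_zero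
  have hj := fun j => hj_contDiff (f := f) hf j
  have hj_d : ∀ j, Differentiable ℝ (fun y => fderiv ℝ f y (EuclideanSpace.single j 1) j) :=
    fun j => (hj j).differentiable one_ne_zero
  have hj_c : ∀ j, Continuous (fun y => fderiv ℝ f y (EuclideanSpace.single j 1) j) :=
    fun j => (hj j).continuous
  have hDhj_c : ∀ j, Continuous (fderiv ℝ (fun y => fderiv ℝ f y (EuclideanSpace.single j 1) j)) :=
    fun j => (hj j).continuous_fderiv one_ne_zero
  -- the family of deformed curves
  set w : ℝ → ℝ → EuclideanSpace ℝ (Fin d) := fun x s => z s + (x * ψ s) • v with hwdef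
  have hw2 : ∀ x, ContDiff ℝ 2 (w x) :=
    fun x => hz.add ((contDiff_const.mul hψ).smul contDiff_const)
  have hw_deriv : ∀ x s, HasDerivAt (w x) (deriv z s + (x * deriv ψ s) • v) s :=
    fun x s => (hz_d s).hasDerivAt.add (((hψ_d s).hasDerivAt.const_mul x).smul_const v)
  have hw_c : Continuous (fun p : ℝ × ℝ => w p.1 p.2) :=
    (hz.continuous.comp continuous_snd).add
      ((continuous_fst.mul (hψ.continuous.comp continuous_snd)).smul continuous_const)
  -- the integrand and its x-derivative
  set F : ℝ → ℝ → ℝ := fun x s =>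
    (1/2) * ‖A (f (w x s) - (deriv z s + (x * deriv ψ s) • v) - η)‖^2
      + (1/2) * ∑ j, fderiv ℝ f (w x s) (EuclideanSpace.single j 1) j with hFdef
  set F' : ℝ → ℝ → ℝ := fun x s =>
    (inner ℝ (A (f (w x s) - (deriv z s + (x * deriv ψ s) • v) - η))
      (A (ψ s • fderiv ℝ f (w x s) v - deriv ψ s • v)) : ℝ)
      + (1/2) * ∑ j, ψ s * fderiv ℝ
          (fun y => fderiv ℝ f y (EuclideanSpace.single j 1) j) (w x s) v with hF'def
  -- OMaction along the deformation equals the parametric integral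
  have hOM : ∀ x, OMaction B η f (w x) = ∫ s in (0:ℝ)..1, F x s := by
    intro x
    refine intervalIntegral.integral_congr (fun s _ => ?_)
    rw [hFdef]
    simp only [OMaction]  -- no-op; real work below
    rw [show deriv (w x) s = deriv z s + (x * deriv ψ s) • v from (hw_deriv x s).deriv]
    rw [← matCLM_apply, ← hA]
  -- derivative of F in the parameter x
  have hF' : ∀ x s, HasDerivAt (fun y => F y s) (F' x s) x := by
    intro x s
    have hc : HasDerivAt (fun y => w y s) (ψ s • v) x := by
      simpa [hwdef] using (((hasDerivAt_mul_const (ψ s)).smul_const v).const_add (z s))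
    have hfc : HasDerivAt (fun y => f (w y s)) (ψ s • fderiv ℝ f (w x s) v) x := by
      have h1 := (hf_d (w x s)).hasFDerivAt.comp_hasDerivAt x hc
      simpa [Function.comp_def] using h1
    have hU : HasDerivAt
        (fun y => f (w y s) - (deriv z s + (y * deriv ψ s) • v) - η)
        (ψ s • fderiv ℝ f (w x s) v - deriv ψ s • v) x := by
      have h2 : HasDerivAt (fun y : ℝ => deriv z s + (y * deriv ψ s) • v)
          (deriv ψ s • v) x := by
        simpa using (((hasDerivAt_mul_const (deriv ψ s)).smul_const v).const_add (deriv z s))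
      exact (hfc.sub h2).sub_const η
    have hAU : HasDerivAt
        (fun y => A (f (w y s) - (deriv z s + (y * deriv ψ s) • v) - η))
        (A (ψ s • fderiv ℝ f (w x s) v - deriv ψ s • v)) x :=
      A.hasFDerivAt.comp_hasDerivAt x hU
    have hsq : HasDerivAt
        (fun y => (1/2) * ‖A (f (w y s) - (deriv z s + (y * deriv ψ s) • v) - η)‖^2)
        (inner ℝ (A (f (w x s) - (deriv z s + (x * deriv ψ s) • v) - η))
          (A (ψ s • fderiv ℝ f (w x s) v - deriv ψ s • v)) : ℝ) x := by
      have h3 := (hAU.inner ℝ hAU).const_mul (1/2 : ℝ)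
      have heq : ∀ y : EuclideanSpace ℝ (Fin d), (inner ℝ y y : ℝ) = ‖y‖^2 :=
        fun y => real_inner_self_eq_norm_sq y
      simp only [heq] at h3
      refine h3.congr_deriv ?_
      rw [real_inner_comm]
      ring
    have htr : HasDerivAt
        (fun y => (1/2) * ∑ j, fderiv ℝ f (w y s) (EuclideanSpace.single j 1) j)
        ((1/2) * ∑ j, ψ s * fderiv ℝ
          (fun y => fderiv ℝ f y (EuclideanSpace.single j 1) j) (w x s) v) x := by
      refine HasDerivAt.const_mul _ (HasDerivAt.fun_sum (fun j _ => ?_))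
      have h4 := (hj_d j (w x s)).hasFDerivAt.comp_hasDerivAt x hc
      simpa [smul_eq_mul, Function.comp_def] using h4
    exact hsq.add htr
  -- joint continuity of F'
  have hF'_cont : Continuous (fun p : ℝ × ℝ => F' p.1 p.2) := by
    have c1 : Continuous (fun p : ℝ × ℝ =>
        A (f (w p.1 p.2) - (deriv z p.2 + (p.1 * deriv ψ p.2) • v) - η)) :=
      A.continuous.comp (((hf_c.comp hw_c).sub ((hz'_c.comp continuous_snd).add
        ((continuous_fst.mul (hψ'_c.comp continuous_snd)).smul continuous_const))).sub
        continuous_const)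
    have c2 : Continuous (fun p : ℝ × ℝ =>
        A (ψ p.2 • fderiv ℝ f (w p.1 p.2) v - deriv ψ p.2 • v)) :=
      A.continuous.comp ((((hψ.continuous.comp continuous_snd)).smul
        ((hDf_c.comp hw_c).clm_apply continuous_const)).sub
        ((hψ'_c.comp continuous_snd).smul continuous_const))
    have c3 : Continuous (fun p : ℝ × ℝ => (1/2 : ℝ) * ∑ j, ψ p.2 * fderiv ℝ
        (fun y => fderiv ℝ f y (EuclideanSpace.single j 1) j) (w p.1 p.2) v) :=
      continuous_const.mul (continuous_finset_sum _ (fun j _ =>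
        (hψ.continuous.comp continuous_snd).mul
          (((hDhj_c j).comp hw_c).clm_apply continuous_const)))
    exact (c1.inner c2).add c3
  -- continuity of F in s for each x
  have hF_cont : ∀ x, Continuous (fun s => F x s) := by
    intro x
    have hwx : Continuous (w x) := hw_c.comp (continuous_const.prodMk continuous_id)
    have c1 : Continuous (fun s =>
        (1/2 : ℝ) * ‖A (f (w x s) - (deriv z s + (x * deriv ψ s) • v) - η)‖^2) :=
      continuous_const.mul (((A.continuous.comp (((hf_c.comp hwx).sub (hz'_c.add
        ((continuous_const.mul hψ'_c).smul continuous_const))).sub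
        continuous_const)).norm).pow 2)
    have c2 : Continuous (fun s =>
        (1/2 : ℝ) * ∑ j, fderiv ℝ f (w x s) (EuclideanSpace.single j 1) j) :=
      continuous_const.mul (continuous_finset_sum _ (fun j _ => (hj_c j).comp hwx))
    exact c1.add c2
  -- uniform bound on F' over a compact set
  obtain ⟨C, hC⟩ := (isCompact_Icc.prod isCompact_Icc :
    IsCompact (Set.Icc (-1:ℝ) 1 ×ˢ Set.Icc (0:ℝ) 1)).exists_bound_of_continuousOn
    hF'_cont.continuousOn
  -- differentiate under the integral sign at x = 0
  have hG : HasDerivAt (fun x => ∫ s in (0:ℝ)..1, F x s)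
      (∫ s in (0:ℝ)..1, F' 0 s) 0 := by
    refine (intervalIntegral.hasDerivAt_integral_of_dominated_loc_of_deriv_le
      (F := F) (F' := F') (bound := fun _ => C) (Metric.ball_mem_nhds (0:ℝ) one_pos)
      (Filter.Eventually.of_forall (fun x => (hF_cont x).aestronglyMeasurable))
      ((hF_cont 0).intervalIntegrable 0 1)
      ((hF'_cont.comp (continuous_const.prodMk continuous_id)).aestronglyMeasurable)
      (MeasureTheory.ae_of_all _ (fun s hs x hx => ?_))
      (intervalIntegrable_const)
      (MeasureTheory.ae_of_all _ (fun s _ x _ => hF' x s))).2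
    have hs' : s ∈ Set.Icc (0:ℝ) 1 := by
      rw [Set.uIoc_of_le (by norm_num : (0:ℝ) ≤ 1)] at hs
      exact ⟨hs.1.le, hs.2⟩
    have hx' : x ∈ Set.Icc (-1:ℝ) 1 := by
      rw [Metric.mem_ball, Real.dist_eq, sub_zero] at hx
      exact ⟨by linarith [abs_lt.mp hx |>.1], by linarith [abs_lt.mp hx |>.2]⟩
    exact hC (x, s) ⟨hx', hs'⟩
  -- the function x ↦ OMaction of the deformed curve has a local min at 0
  have hw0 : w 0 = z := by funext s; simp [hwdef]
  have hmin' : ∀ x, (fun x => ∫ s in (0:ℝ)..1, F x s) 0 ≤ (fun x => ∫ s in (0:ℝ)..1, F x s) x := by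
    intro x
    show (∫ s in (0:ℝ)..1, F 0 s) ≤ ∫ s in (0:ℝ)..1, F x s
    rw [← hOM 0, ← hOM x, hw0]
    exact hmin (w x) (hw2 x) (by simp [hwdef, hψ0]) (by simp [hwdef, hψ1])
  have hloc : IsLocalMin (fun x => ∫ s in (0:ℝ)..1, F x s) 0 :=
    Filter.Eventually.of_forall hmin'
  have hder0 : ∫ s in (0:ℝ)..1, F' 0 s = 0 := hloc.hasDerivAt_eq_zero hG
  -- continuity of P, Q, Qd
  have hu_c : Continuous (uFun η f z) := by
    unfold uFun
    exact ((hf_c.comp hz.continuous).sub hz'_c).sub continuous_const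
  have hP_c : Continuous (Pfun A η f z v) := by
    unfold Pfun Sfun
    exact ((A.continuous.comp hu_c).inner (A.continuous.comp
      ((hDf_c.comp hz.continuous).clm_apply continuous_const))).add
      (continuous_const.mul (continuous_finset_sum _ (fun j _ =>
        ((hDhj_c j).comp hz.continuous).clm_apply continuous_const)))
  have hQ_c : Continuous (Qfun A η f z v) := by
    unfold Qfun
    exact (A.continuous.comp hu_c).inner continuous_const
  have hQd_c : Continuous (Qdfun A f z v) := by
    unfold Qdfun
    exact (A.continuous.comp (((hDf_c.comp hz.continuous).clm_apply hz'_c).sub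
      hz''_c)).inner continuous_const
  -- pointwise identity for F' 0
  have heq1 : ∀ s, F' 0 s = ψ s * Pfun A η f z v s - deriv ψ s * Qfun A η f z v s := by
    intro s
    show (inner ℝ (A (f (w 0 s) - (deriv z s + ((0:ℝ) * deriv ψ s) • v) - η))
      (A (ψ s • fderiv ℝ f (w 0 s) v - deriv ψ s • v)) : ℝ)
      + (1/2) * ∑ j, ψ s * fderiv ℝ
          (fun y => fderiv ℝ f y (EuclideanSpace.single j 1) j) (w 0 s) v
      = ψ s * Pfun A η f z v s - deriv ψ s * Qfun A η f z v s
    have hw0s : w 0 s = z s := by simp [hwdef]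
    rw [hw0s]
    rw [show (∑ j, ψ s * fderiv ℝ
        (fun y => fderiv ℝ f y (EuclideanSpace.single j 1) j) (z s) v)
      = ψ s * ∑ j, fderiv ℝ
        (fun y => fderiv ℝ f y (EuclideanSpace.single j 1) j) (z s) v from
      (Finset.mul_sum _ _ _).symm]
    simp only [Pfun, Qfun, uFun, Sfun, zero_mul, zero_smul, add_zero, map_sub,
      _root_.map_smul, inner_sub_right, real_inner_smul_right]
    ring
  have hstep1 : ∫ s in (0:ℝ)..1,
      (ψ s * Pfun A η f z v s - deriv ψ s * Qfun A η f z v s) = 0 := by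
    have hcg : (∫ s in (0:ℝ)..1,
        (ψ s * Pfun A η f z v s - deriv ψ s * Qfun A η f z v s))
        = ∫ s in (0:ℝ)..1, F' 0 s :=
      intervalIntegral.integral_congr (fun s _ => (heq1 s).symm)
    rw [hcg, hder0]
  -- derivative of Q is Qd
  have hQder : ∀ s, HasDerivAt (Qfun A η f z v) (Qdfun A f z v s) s := by
    intro s
    have hu : HasDerivAt (uFun η f z)
        (fderiv ℝ f (z s) (deriv z s) - deriv (deriv z) s) s := by
      unfold uFun
      exact (((hf_d (z s)).hasFDerivAt.comp_hasDerivAt s (hz_d s).hasDerivAt).sub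
        (hz'_d s).hasDerivAt).sub_const η
    have h5 := (A.hasFDerivAt.comp_hasDerivAt s hu).inner ℝ (hasDerivAt_const s (A v))
    simp only [inner_zero_right, zero_add, add_zero, Function.comp] at h5
    exact h5
  -- integration by parts
  have hibp : ∫ s in (0:ℝ)..1,
      (deriv ψ s * Qfun A η f z v s + ψ s * Qdfun A f z v s) = 0 := by
    rw [intervalIntegral.integral_deriv_mul_eq_sub
      (fun s _ => (hψ_d s).hasDerivAt) (fun s _ => hQder s)
      (hψ'_c.intervalIntegrable 0 1) (hQd_c.intervalIntegrable 0 1), hψ0, hψ1]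
    ring
  -- combine
  have hi1 : IntervalIntegrable
      (fun s => ψ s * Pfun A η f z v s - deriv ψ s * Qfun A η f z v s) volume 0 1 :=
    ((hψ.continuous.mul hP_c).sub (hψ'_c.mul hQ_c)).intervalIntegrable 0 1
  have hi2 : IntervalIntegrable
      (fun s => deriv ψ s * Qfun A η f z v s + ψ s * Qdfun A f z v s) volume 0 1 :=
    ((hψ'_c.mul hQ_c).add (hψ.continuous.mul hQd_c)).intervalIntegrable 0 1
  have hsplit : ∫ s in (0:ℝ)..1,
      ψ s * (Pfun A η f z v s + Qdfun A f z v s)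
      = (∫ s in (0:ℝ)..1,
          (ψ s * Pfun A η f z v s - deriv ψ s * Qfun A η f z v s))
        + ∫ s in (0:ℝ)..1,
          (deriv ψ s * Qfun A η f z v s + ψ s * Qdfun A f z v s) := by
    rw [← intervalIntegral.integral_add hi1 hi2]
    exact intervalIntegral.integral_congr (fun s _ => by ring)
  rw [hsplit, hstep1, hibp, add_zero]

end keysec

lemma PQd_cont {d : ℕ} {f : EuclideanSpace ℝ (Fin d) → EuclideanSpace ℝ (Fin d)}
    {z : ℝ → EuclideanSpace ℝ (Fin d)}
    (A : EuclideanSpace ℝ (Fin d) →L[ℝ] EuclideanSpace ℝ (Fin d))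
    (η v : EuclideanSpace ℝ (Fin d))
    (hf : ContDiff ℝ 2 f) (hz : ContDiff ℝ 2 z) :
    Continuous (fun s => Pfun A η f z v s + Qdfun A f z v s) := by
  have hz11 : ContDiff ℝ (1+1) z := by rw [one_add_one_eq_two]; exact_mod_cast hz
  have hz'_cd : ContDiff ℝ 1 (deriv z) := (contDiff_succ_iff_deriv.mp hz11).2.2
  have hz'_c : Continuous (deriv z) := hz'_cd.continuous
  have hz''_c : Continuous (deriv (deriv z)) := (contDiff_one_iff_deriv.mp hz'_cd).2
  have hf_c : Continuous f := hf.continuous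
  have hDf_c : Continuous (fderiv ℝ f) := hf.continuous_fderiv two_ne_zero
  have hDhj_c : ∀ j, Continuous (fderiv ℝ (fun y => fderiv ℝ f y (EuclideanSpace.single j 1) j)) :=
    fun j => (hj_contDiff hf j).continuous_fderiv one_ne_zero
  have hu_c : Continuous (uFun η f z) := by
    unfold uFun
    exact ((hf_c.comp hz.continuous).sub hz'_c).sub continuous_const
  have hP_c : Continuous (Pfun A η f z v) := by
    unfold Pfun Sfun
    exact ((A.continuous.comp hu_c).inner (A.continuous.comp
      ((hDf_c.comp hz.continuous).clm_apply continuous_const))).add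
      (continuous_const.mul (continuous_finset_sum _ (fun j _ =>
        ((hDhj_c j).comp hz.continuous).clm_apply continuous_const)))
  have hQd_c : Continuous (Qdfun A f z v) := by
    unfold Qdfun
    exact (A.continuous.comp (((hDf_c.comp hz.continuous).clm_apply hz'_c).sub
      hz''_c)).inner continuous_const
  exact hP_c.add hQd_c

/-- Theorem 3.1(i) of the paper (the Euler–Lagrange equation (3.2)): a `C²` minimizer `z` of the
Onsager–Machlup action among `C²` curves with fixed endpoints satisfies, for `t ∈ (0,1)` and each
coordinate `i`,
`⟨B⁻¹(z̈ − Df(z)ż), B⁻¹eᵢ⟩ = ⟨B⁻¹(f(z) − ż − η), B⁻¹ ∂f/∂xᵢ(z)⟩ + (1/2) Σⱼ ∂²fʲ/∂xᵢ∂xⱼ(z)`. -/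
theorem OM_minimizer_satisfies_euler_lagrange
    (d : ℕ) (hd : 1 ≤ d)
    (B : Matrix (Fin d) (Fin d) ℝ) (hB : IsUnit B.det)
    (η : EuclideanSpace ℝ (Fin d))
    (f : EuclideanSpace ℝ (Fin d) → EuclideanSpace ℝ (Fin d))
    (hf : ContDiff ℝ 2 f)
    (z₀ z₁ : EuclideanSpace ℝ (Fin d))
    (z : ℝ → EuclideanSpace ℝ (Fin d))
    (hz : ContDiff ℝ 2 z) (hz0 : z 0 = z₀) (hz1 : z 1 = z₁)
    (hmin : ∀ w : ℝ → EuclideanSpace ℝ (Fin d),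
      ContDiff ℝ 2 w → w 0 = z₀ → w 1 = z₁ → OMaction B η f z ≤ OMaction B η f w) :
    ∀ t ∈ Set.Ioo (0:ℝ) 1, ∀ i : Fin d,
      (inner ℝ (matMulVec B⁻¹ (deriv (deriv z) t - fderiv ℝ f (z t) (deriv z t)))
          (matMulVec B⁻¹ (EuclideanSpace.single i 1)) : ℝ)
        = (inner ℝ (matMulVec B⁻¹ (f (z t) - deriv z t - η))
            (matMulVec B⁻¹ (fderiv ℝ f (z t) (EuclideanSpace.single i 1))) : ℝ)
          + (1 / 2) * ∑ j, fderiv ℝ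
              (fun x => fderiv ℝ f x (EuclideanSpace.single j 1) j) (z t)
              (EuclideanSpace.single i 1) := by

  intro t₀ ht₀ i
  set v : EuclideanSpace ℝ (Fin d) := EuclideanSpace.single i 1 with hv
  set A : EuclideanSpace ℝ (Fin d) →L[ℝ] EuclideanSpace ℝ (Fin d) := matCLM B⁻¹ with hA
  have hmin' : ∀ w : ℝ → EuclideanSpace ℝ (Fin d),
      ContDiff ℝ 2 w → w 0 = z 0 → w 1 = z 1 → OMaction B η f z ≤ OMaction B η f w := by
    intro w hw h0 h1
    exact hmin w hw (hz0 ▸ h0) (hz1 ▸ h1)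
  have h0 : Pfun A η f z v t₀ + Qdfun A f z v t₀ = 0 :=
    fund_lemma (PQd_cont A η v hf hz)
      (fun ψ hψ hψ0 hψ1 => key_lemma B η hf hz hmin' v ψ hψ hψ0 hψ1) ht₀
  have h2 : (inner ℝ (A (deriv (deriv z) t₀ - fderiv ℝ f (z t₀) (deriv z t₀))) (A v) : ℝ)
      = - Qdfun A f z v t₀ := by
    simp only [Qdfun, map_sub, inner_sub_left]
    ring
  have hgoal : (inner ℝ (A (deriv (deriv z) t₀ - fderiv ℝ f (z t₀) (deriv z t₀))) (A v) : ℝ)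
      = Pfun A η f z v t₀ := by linarith
  simp only [← matCLM_apply, ← hA, ← hv]
  simpa only [Pfun, uFun, Sfun] using hgoal
end

section
/- Let d ≥ 1, let B = diag(b₁,…,b_d) with all b_i ≠ 0, let η ∈ ℝ^d, and let f : ℝ^d → ℝ^d be twice continuously differentiable such that the matrix (B⁻¹)ᵀB⁻¹Df(x) is symmetric for every x (i.e. (∂f^i/∂x_j)(x)/b_i² = (∂f^j/∂x_i)(x)/b_j² for all i, j, x). Then a twice continuously differentiable curve z : [0,1] → ℝ^d satisfies, for all t and all i, the Euler–Lagrange equation ⟨B⁻¹(z̈(t) − Df(z(t))ż(t)), B⁻¹e_i⟩ = ⟨B⁻¹(f(z(t)) − ż(t) − η), B⁻¹ ∂f/∂x_i(z(t))⟩ + (1/2)Σ_j ∂²f^j/∂x_i∂x_j(z(t)) if and only if it satisfies the Newton system z̈_i(t) = Σ_{j=1}^{d} (b_i²/b_j²)(f^j(z(t)) − η_j) ∂f^j/∂x_i(z(t)) + (b_i²/2) Σ_{j=1}^{d} ∂²f^j/∂x_i∂x_j(z(t)) for all t and all i. -/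
private lemma matMulVec_diag_inv {d : ℕ} (b : Fin d → ℝ) (hb : ∀ i, b i ≠ 0)
    (v : EuclideanSpace ℝ (Fin d)) (k : Fin d) :
    matMulVec (Matrix.diagonal b)⁻¹ v k = (b k)⁻¹ * v k := by
  have h : (Matrix.diagonal b)⁻¹ = Matrix.diagonal (fun k => (b k)⁻¹) := by
    apply Matrix.inv_eq_right_inv
    rw [Matrix.diagonal_mul_diagonal]
    ext i j
    by_cases h : i = j <;> simp [h, Matrix.one_apply, mul_inv_cancel₀ (hb i), mul_inv_cancel₀ (hb j)]
  show (Matrix.diagonal b)⁻¹.mulVec v k = _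
  rw [h, Matrix.mulVec_diagonal]

private lemma clm_apply_eq_sum {d : ℕ} (L : EuclideanSpace ℝ (Fin d) →L[ℝ] EuclideanSpace ℝ (Fin d))
    (v : EuclideanSpace ℝ (Fin d)) (i : Fin d) :
    L v i = ∑ j, v j * L (EuclideanSpace.single j 1) i := by
  have hv : v = ∑ j, v j • EuclideanSpace.single j (1:ℝ) := by
    ext k
    rw [WithLp.ofLp_sum, Finset.sum_apply]
    simp [EuclideanSpace.single_apply]
  conv_lhs => rw [hv]
  rw [map_sum, WithLp.ofLp_sum, Finset.sum_apply]
  congr 1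
  ext j
  rw [map_smul]
  simp

/-- Remark 3.3 of the paper: for a diagonal noise matrix `B = diag(b₁,…,b_d)` with the scaled
Jacobian `(B⁻¹)ᵀB⁻¹Df(x)` symmetric (i.e. `(∂fⁱ/∂xⱼ)/bᵢ² = (∂fʲ/∂xᵢ)/bⱼ²`), a `C²` curve `z`
satisfies the Euler–Lagrange equation of the Onsager–Machlup Lagrangian if and only if it
satisfies the Newton system
`z̈ᵢ = Σⱼ (bᵢ²/bⱼ²)(fʲ(z) − ηⱼ) ∂fʲ/∂xᵢ(z) + (bᵢ²/2) Σⱼ ∂²fʲ/∂xᵢ∂xⱼ(z)`. -/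
theorem euler_lagrange_iff_newton_system_of_diagonal
    (d : ℕ) (hd : 1 ≤ d)
    (b : Fin d → ℝ) (hb : ∀ i, b i ≠ 0)
    (η : EuclideanSpace ℝ (Fin d))
    (f : EuclideanSpace ℝ (Fin d) → EuclideanSpace ℝ (Fin d))
    (hf : ContDiff ℝ 2 f)
    (hsym : ∀ (x : EuclideanSpace ℝ (Fin d)) (i j : Fin d),
      fderiv ℝ f x (EuclideanSpace.single j 1) i / (b i) ^ 2
        = fderiv ℝ f x (EuclideanSpace.single i 1) j / (b j) ^ 2)
    (z : ℝ → EuclideanSpace ℝ (Fin d))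
    (hz : ContDiff ℝ 2 z) :
    (∀ t ∈ Set.Icc (0:ℝ) 1, ∀ i : Fin d,
      (inner ℝ (matMulVec (Matrix.diagonal b)⁻¹
            (deriv (deriv z) t - fderiv ℝ f (z t) (deriv z t)))
          (matMulVec (Matrix.diagonal b)⁻¹ (EuclideanSpace.single i 1)) : ℝ)
        = (inner ℝ (matMulVec (Matrix.diagonal b)⁻¹ (f (z t) - deriv z t - η))
            (matMulVec (Matrix.diagonal b)⁻¹
              (fderiv ℝ f (z t) (EuclideanSpace.single i 1))) : ℝ)
          + (1 / 2) * ∑ j, fderiv ℝ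
              (fun x => fderiv ℝ f x (EuclideanSpace.single j 1) j) (z t)
              (EuclideanSpace.single i 1))
    ↔ (∀ t ∈ Set.Icc (0:ℝ) 1, ∀ i : Fin d,
      deriv (deriv z) t i
        = (∑ j, ((b i) ^ 2 / (b j) ^ 2) * (f (z t) j - η j)
            * fderiv ℝ f (z t) (EuclideanSpace.single i 1) j)
          + ((b i) ^ 2 / 2) * ∑ j, fderiv ℝ
              (fun x => fderiv ℝ f x (EuclideanSpace.single j 1) j) (z t)
              (EuclideanSpace.single i 1)) := by
  have key : ∀ (t : ℝ) (i : Fin d),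
      ((inner ℝ (matMulVec (Matrix.diagonal b)⁻¹
            (deriv (deriv z) t - fderiv ℝ f (z t) (deriv z t)))
          (matMulVec (Matrix.diagonal b)⁻¹ (EuclideanSpace.single i 1)) : ℝ)
        = (inner ℝ (matMulVec (Matrix.diagonal b)⁻¹ (f (z t) - deriv z t - η))
            (matMulVec (Matrix.diagonal b)⁻¹
              (fderiv ℝ f (z t) (EuclideanSpace.single i 1))) : ℝ)
          + (1 / 2) * ∑ j, fderiv ℝ
              (fun x => fderiv ℝ f x (EuclideanSpace.single j 1) j) (z t)
              (EuclideanSpace.single i 1))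
      ↔ (deriv (deriv z) t i
        = (∑ j, ((b i) ^ 2 / (b j) ^ 2) * (f (z t) j - η j)
            * fderiv ℝ f (z t) (EuclideanSpace.single i 1) j)
          + ((b i) ^ 2 / 2) * ∑ j, fderiv ℝ
              (fun x => fderiv ℝ f x (EuclideanSpace.single j 1) j) (z t)
              (EuclideanSpace.single i 1)) := by
    intro t i
    set s := fderiv ℝ f (z t) with hs
    set A := deriv (deriv z) t i with hA
    set S := ∑ j, fderiv ℝ (fun x => fderiv ℝ f x (EuclideanSpace.single j 1) j) (z t)
        (EuclideanSpace.single i 1) with hS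
    set w := deriv z t with hw
    -- inner products elementwise
    have hinner : ∀ u v : EuclideanSpace ℝ (Fin d),
        (inner ℝ (matMulVec (Matrix.diagonal b)⁻¹ u) (matMulVec (Matrix.diagonal b)⁻¹ v) : ℝ)
          = ∑ k, ((b k)⁻¹ * u k) * ((b k)⁻¹ * v k) := by
      intro u v
      rw [PiLp.inner_apply]
      refine Finset.sum_congr rfl fun k _ => ?_
      rw [matMulVec_diag_inv b hb, matMulVec_diag_inv b hb]
      simp [mul_comm]
    -- LHS of EL
    have hLHS : (inner ℝ (matMulVec (Matrix.diagonal b)⁻¹ (deriv (deriv z) t - s w))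
          (matMulVec (Matrix.diagonal b)⁻¹ (EuclideanSpace.single i 1)) : ℝ)
        = (A - s w i) / (b i)^2 := by
      rw [hinner]
      rw [Finset.sum_eq_single i]
      · simp [PiLp.sub_apply]
        ring
      · intro k _ hk
        simp [EuclideanSpace.single_apply, hk]
      · simp
    -- RHS inner of EL
    have hRHS : (inner ℝ (matMulVec (Matrix.diagonal b)⁻¹ (f (z t) - w - η))
          (matMulVec (Matrix.diagonal b)⁻¹ (s (EuclideanSpace.single i 1))) : ℝ)
        = (∑ j, (f (z t) j - η j) * s (EuclideanSpace.single i 1) j / (b j)^2)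
          - ∑ j, w j * s (EuclideanSpace.single i 1) j / (b j)^2 := by
      rw [hinner, ← Finset.sum_sub_distrib]
      refine Finset.sum_congr rfl fun j _ => ?_
      simp only [PiLp.sub_apply]
      field_simp
      ring
    -- symmetry cancellation
    have hcancel : ∑ j, w j * s (EuclideanSpace.single i 1) j / (b j)^2
        = s w i / (b i)^2 := by
      have : s w i = ∑ j, w j * s (EuclideanSpace.single j 1) i := clm_apply_eq_sum s w i
      rw [this, Finset.sum_div]
      refine Finset.sum_congr rfl fun j _ => ?_
      rw [mul_div_assoc, mul_div_assoc, ← hsym (z t) i j]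
    have hbi : (b i)^2 ≠ 0 := pow_ne_zero 2 (hb i)
    rw [hLHS, hRHS, hcancel]
    set X := ∑ j, (f (z t) j - η j) * s (EuclideanSpace.single i 1) j / (b j)^2 with hX
    have hX2 : ∑ j, ((b i) ^ 2 / (b j) ^ 2) * (f (z t) j - η j)
          * s (EuclideanSpace.single i 1) j = (b i)^2 * X := by
      rw [hX, Finset.mul_sum]
      refine Finset.sum_congr rfl fun j _ => ?_
      ring
    rw [hX2]
    have hexp : (b i)^2 * (X - s w i / (b i)^2 + 1/2 * S)
        = (b i)^2 * X - s w i + (b i)^2/2 * S := by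
      have hi := hb i
      field_simp
    constructor
    · intro h
      have h2 := (div_eq_iff hbi).mp h
      rw [mul_comm, hexp] at h2
      linarith
    · intro h
      rw [div_eq_iff hbi, mul_comm, hexp]
      linarith
  constructor
  · intro h t ht i
    exact (key t i).mp (h t ht i)
  · intro h t ht i
    exact (key t i).mpr (h t ht i)
end
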